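/- Let S be an abelian semigroup, B a Banach space, n a positive integer, φ : S^{n+1} → [0, ∞), and let g : S^n → B be a symmetric function satisfying ‖D_n g(z)‖ ≤ φ(z) for all z ∈ S^{n+1}. Then ‖g(2y) − 2^n g(y)‖ ≤ r_n φ(y) for every y ∈ S^n, where 2y denotes (2x_1, …, 2x_n) for y = (x_1, …, x_n) and 2x := x + x. -/

import Mathlib

/-- The Cauchy difference operator `D_n` for a function of `n = m + 1` variables:
`D_n g (x₁, …, x_{n+1}) = g(x₁, …, x_{n-1}, x_n + x_{n+1}) - g(x₁, …, x_n)
- g(x₁, …, x_{n-1}, x_{n+1})`. -/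
def Dop {S B : Type*} [AddCommSemigroup S] [AddCommGroup B] (m : ℕ)
    (g : (Fin (m + 1) → S) → B) (z : Fin (m + 2) → S) : B :=
  g (Function.update (fun i : Fin (m + 1) => z i.castSucc) (Fin.last m)
      (z (Fin.castSucc (Fin.last m)) + z (Fin.last (m + 1))))
    - g (fun i : Fin (m + 1) => z i.castSucc)
    - g (Function.update (fun i : Fin (m + 1) => z i.castSucc) (Fin.last m)
      (z (Fin.last (m + 1))))

/-- The operator `r_n` for `n = m + 1`:
`r_n φ (x₁, …, x_n) = ∑_{j=1}^{n} 2^{j-1} φ(2x₁, …, 2x_{n-j}, x_n, x_{n-1}, …,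
x_{n-j+1}, x_{n-j+1})` (here indexed by `j = jj + 1`, `jj ∈ {0, …, m}`, and tuples are
`0`-indexed: `x_{i+1} = y i`). -/
def rop {S : Type*} [AddCommSemigroup S] (m : ℕ)
    (φ : (Fin (m + 2) → S) → ℝ) (y : Fin (m + 1) → S) : ℝ :=
  ∑ jj ∈ Finset.range (m + 1), 2 ^ jj *
    φ (fun i : Fin (m + 2) =>
      if h1 : (i : ℕ) < m - jj then y ⟨i, by omega⟩ + y ⟨i, by omega⟩
      else if h2 : m ≤ (i : ℕ) then y ⟨m - jj, by omega⟩
      else y ⟨2 * m - jj - i, by omega⟩)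

/-- If a symmetric `g` satisfies `‖D_n g z‖ ≤ φ z` then
`‖g (2y) - 2ⁿ g y‖ ≤ r_n φ y` (where `n = m + 1` and `2x := x + x`). -/
theorem stmt3 {S B : Type*} [AddCommSemigroup S] [NormedAddCommGroup B]
    [NormedSpace ℝ B] [CompleteSpace B]
    (m : ℕ) (φ : (Fin (m + 2) → S) → ℝ) (hφ : ∀ z, 0 ≤ φ z)
    (g : (Fin (m + 1) → S) → B)
    (hgsym : ∀ (x : Fin (m + 1) → S) (σ : Equiv.Perm (Fin (m + 1))), g (x ∘ σ) = g x)
    (hgD : ∀ z, ‖Dop m g z‖ ≤ φ z) (y : Fin (m + 1) → S) :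
    ‖g (fun i => y i + y i) - 2 ^ (m + 1) • g y‖ ≤ rop m φ y := by
  classical
  set Y : ℕ → S := fun a => y ⟨min a m, Nat.lt_succ_of_le (min_le_right a m)⟩ with hY
  have hYa : ∀ (a : ℕ) (h : a < m + 1), y ⟨a, h⟩ = Y a := by
    intro a h
    simp only [hY]
    congr 1
    ext
    simp
    omega
  have hYi : ∀ i : Fin (m + 1), y i = Y i := fun i => hYa i.1 i.2
  -- `w k` : tuple with first `k` coordinates doubled
  set w : ℕ → Fin (m+1) → S := fun k i => if (i:ℕ) < k then Y i + Y i else Y i with hw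
  -- `T k` : the `(m+2)`-tuple for the `k`-th step
  set T : ℕ → Fin (m+2) → S := fun k i =>
    if (i:ℕ) < min k (m+1) then Y i + Y i
    else if m ≤ (i:ℕ) then Y k
    else Y (m + k - i) with hT
  have hkey : ∀ k, k ≤ m → g (w (k+1)) - 2 • g (w k) = Dop m g (T k) := by
    intro k hk
    have hσinv : Function.Involutive (fun i : Fin (m+1) =>
        if h : (i:ℕ) < k then i else ⟨m + k - (i:ℕ), by omega⟩) := by
      intro i
      by_cases h : (i:ℕ) < k
      · simp [h]
      · simp only [h, dif_neg, not_false_iff]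
        have h2 : ¬ ((↑(⟨m + k - (i:ℕ), by omega⟩ : Fin (m+1)) : ℕ) < k) := by simp; omega
        rw [dif_neg h2]
        ext
        simp
        omega
    set σ : Equiv.Perm (Fin (m+1)) := hσinv.toPerm _ with hσ
    have hσapp : ∀ i : Fin (m+1), (σ i : ℕ) = if (i:ℕ) < k then (i:ℕ) else m + k - (i:ℕ) := by
      intro i
      show (↑(if h : (i:ℕ) < k then i else ⟨m + k - (i:ℕ), by omega⟩) : ℕ) = _
      by_cases h : (i:ℕ) < k
      · rw [dif_pos h, if_pos h]
      · rw [dif_neg h, if_neg h]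
    have hTm : T k ((Fin.last m).castSucc) = Y k := by
      simp only [hT, Fin.coe_castSucc, Fin.val_last]
      rw [if_neg (by omega), if_pos (le_refl m)]
    have hTm1 : T k (Fin.last (m+1)) = Y k := by
      simp only [hT, Fin.val_last]
      rw [if_neg (by omega), if_pos (by omega)]
    have hB : (fun i : Fin (m+1) => T k i.castSucc) = w k ∘ ⇑σ := by
      funext i
      simp only [hT, hw, Function.comp_apply, Fin.coe_castSucc, hσapp]
      split_ifs <;>
        first
        | rfl
        | (exfalso; omega)
        | (congr 1 <;> omega)
        | (congr 1 <;> congr 1 <;> omega)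
    have hC : Function.update (fun i : Fin (m+1) => T k i.castSucc) (Fin.last m)
        (T k (Fin.last (m+1))) = w k ∘ ⇑σ := by
      rw [← hB]
      have h0 : T k (Fin.last (m+1)) = (fun i : Fin (m+1) => T k i.castSucc) (Fin.last m) := by
        rw [hTm1]; exact hTm.symm
      rw [h0, Function.update_eq_self]
    have hA : Function.update (fun i : Fin (m+1) => T k i.castSucc) (Fin.last m)
        (T k ((Fin.last m).castSucc) + T k (Fin.last (m+1))) = w (k+1) ∘ ⇑σ := by
      funext i
      by_cases hi : i = Fin.last m
      · subst hi
        rw [Function.update_self, hTm, hTm1]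
        simp only [hw, Function.comp_apply, Fin.val_last, hσapp]
        split_ifs <;>
          first
          | rfl
          | (exfalso; omega)
          | (congr 1 <;> omega)
          | (congr 1 <;> congr 1 <;> omega)
      · rw [Function.update_of_ne hi]
        have hilt : (i:ℕ) < m := Fin.val_lt_last hi
        simp only [hT, hw, Function.comp_apply, Fin.coe_castSucc, hσapp]
        split_ifs <;>
          first
          | rfl
          | (exfalso; omega)
          | (congr 1 <;> omega)
          | (congr 1 <;> congr 1 <;> omega)
    rw [Dop, hA, hC, hB, hgsym, hgsym, two_smul]
    abel
  -- telescoping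
  have htel : g (fun i => y i + y i) - 2 ^ (m + 1) • g y
      = ∑ k ∈ Finset.range (m+1), (2:ℕ)^(m-k) • (g (w (k+1)) - 2 • g (w k)) := by
    have hsum := Finset.sum_range_sub (f := fun k => (2:ℕ)^(m+1-k) • g (w k)) (m+1)
    have hterm : ∀ k ∈ Finset.range (m+1),
        (2:ℕ)^(m-k) • (g (w (k+1)) - 2 • g (w k))
        = (2:ℕ)^(m+1-(k+1)) • g (w (k+1)) - (2:ℕ)^(m+1-k) • g (w k) := by
      intro k hk
      simp only [Finset.mem_range] at hk
      rw [smul_sub, Nat.succ_sub_succ]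
      congr 1
      rw [smul_smul]
      congr 1
      have h2 : m + 1 - k = (m - k) + 1 := by omega
      rw [h2, pow_succ]
    rw [Finset.sum_congr rfl hterm, hsum]
    have hw0 : w 0 = y := by
      funext i; simp [hw, hYi i]
    have hwm : w (m+1) = fun i => y i + y i := by
      funext i
      simp only [hw]
      rw [if_pos (by omega), hYi i]
    rw [hw0, hwm]
    simp
  -- the bound
  have hbound : ‖g (fun i => y i + y i) - 2 ^ (m + 1) • g y‖
      ≤ ∑ k ∈ Finset.range (m+1), (2:ℝ)^(m-k) * φ (T k) := by
    rw [htel]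
    refine le_trans (norm_sum_le _ _) (Finset.sum_le_sum ?_)
    intro k hk
    simp only [Finset.mem_range] at hk
    rw [hkey k (by omega)]
    calc ‖(2:ℕ)^(m-k) • Dop m g (T k)‖
        ≤ (((2:ℕ)^(m-k) : ℕ) : ℝ) * ‖Dop m g (T k)‖ := norm_nsmul_le
      _ = (2:ℝ)^(m-k) * ‖Dop m g (T k)‖ := by push_cast; ring
      _ ≤ (2:ℝ)^(m-k) * φ (T k) :=
          mul_le_mul_of_nonneg_left (hgD _) (by positivity)
  -- identify the sum with `rop`
  have hrop : rop m φ y = ∑ k ∈ Finset.range (m+1), (2:ℝ)^(m-k) * φ (T k) := by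
    rw [rop, ← Finset.sum_range_reflect]
    refine Finset.sum_congr rfl ?_
    intro k hk
    simp only [Finset.mem_range] at hk
    have h1 : m + 1 - 1 - k = m - k := by omega
    rw [h1]
    have hAT : (fun i : Fin (m + 2) =>
        if h1 : (i : ℕ) < m - (m - k) then y ⟨i, by omega⟩ + y ⟨i, by omega⟩
        else if h2 : m ≤ (i : ℕ) then y ⟨m - (m - k), by omega⟩
        else y ⟨2 * m - (m - k) - i, by omega⟩) = T k := by
      funext i
      simp only [hT]
      by_cases c1 : (i:ℕ) < k
      · rw [dif_pos (by omega), if_pos (by omega), hYa]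
      · rw [dif_neg (by omega), if_neg (by omega)]
        by_cases c2 : m ≤ (i:ℕ)
        · rw [dif_pos c2, if_pos c2, hYa]
          congr 1
          omega
        · rw [dif_neg c2, if_neg c2, hYa]
          congr 1
          omega
    rw [hAT]
  rw [hrop]
  exact hbound
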